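/- arXiv:1104.0293 — 2 statements merged into one kernel-verified Lean document; each statement's English description precedes it below -/
import Mathlib

section
/- Let H be a reduced, commutative, cancellative, atomic monoid, let a ∈ H, and let x, y ∈ Z(a) with |x| = |y|. If x and y are not ≈_eq-related (i.e., no equal-length R-chain connects them), then (x,y) ∈ A_a(∼_{H,eq}). -/
namespace CMR

variable {α : Type*} [CancelCommMonoid α]

/-- The factorization monoid `Z(H)`: the free abelian monoid over the set of atoms of `H`,
modeled as multisets of atoms. -/
abbrev Fac (α : Type*) [CancelCommMonoid α] : Type _ := Multiset {u : α // Irreducible u}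

/-- The factorization homomorphism `π : Z(H) → H`. -/
def piF (z : Fac α) : α := (z.map Subtype.val).prod

/-- `Z a`: the set of factorizations of `a`. -/
def Z (a : α) : Set (Fac α) := {z | piF z = a}

/-- `L a`: the set of lengths of `a`. -/
def L (a : α) : Set ℕ := {n | ∃ z ∈ Z a, Multiset.card z = n}

/-- `Zk a k`: the factorizations of `a` of length `k`. -/
def Zk (a : α) (k : ℕ) : Set (Fac α) := {z ∈ Z a | Multiset.card z = k}

/-- `ZM a M`: the factorizations of `a` whose length lies in `M`. -/
def ZM (a : α) (M : Set ℕ) : Set (Fac α) := {z ∈ Z a | Multiset.card z ∈ M}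

/-- The distance between two factorizations:
`d(z,z') = max (|z / gcd(z,z')|, |z' / gcd(z,z')|)`. -/
noncomputable def d (z z' : Fac α) : ℕ :=
  letI := Classical.decEq {u : α // Irreducible u}
  max (Multiset.card (z - z')) (Multiset.card (z' - z))

/-- The distance between two sets of factorizations, the minimum of pairwise
distances (with the convention `sInf ∅ = 0`). -/
noncomputable def dS (X Y : Set (Fac α)) : ℕ :=
  sInf {n : ℕ | ∃ x ∈ X, ∃ y ∈ Y, d x y = n}

/-- `k` and `l` are adjacent lengths of `a` (with `k < l`):
`L(a) ∩ [k, l] = {k, l}`. -/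
def Adjacent (a : α) (k l : ℕ) : Prop :=
  k ∈ L a ∧ l ∈ L a ∧ k < l ∧ ∀ m ∈ L a, k ≤ m → m ≤ l → m = k ∨ m = l

/-- A chain of factorizations of `a` from `z` to `z'` whose consecutive members
satisfy the step predicate `P`. -/
def Chain (a : α) (P : Fac α → Fac α → Prop) (z z' : Fac α) : Prop :=
  ∃ (n : ℕ) (c : Fin (n + 1) → Fac α),
    c 0 = z ∧ c (Fin.last n) = z' ∧ (∀ i, c i ∈ Z a) ∧
    ∀ i : Fin n, P (c i.castSucc) (c i.succ)

/-- The catenary degree of an element: the smallest `N ∈ ℕ∞` such that any two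
factorizations of `a` are connected by an `N`-chain. -/
noncomputable def cat (a : α) : ℕ∞ :=
  sInf {N : ℕ∞ | ∀ z ∈ Z a, ∀ z' ∈ Z a,
    Chain a (fun x y => (d x y : ℕ∞) ≤ N) z z'}

/-- The equal catenary degree of an element: the smallest `N ∈ ℕ∞` such that any two
factorizations of `a` of the same length are connected by an equal-length `N`-chain. -/
noncomputable def ceq (a : α) : ℕ∞ :=
  sInf {N : ℕ∞ | ∀ z ∈ Z a, ∀ z' ∈ Z a, Multiset.card z = Multiset.card z' →
    Chain a (fun x y => (d x y : ℕ∞) ≤ N ∧ Multiset.card x = Multiset.card y) z z'}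

/-- The monotone catenary degree of an element: the smallest `N ∈ ℕ∞` such that any two
factorizations of `a` (ordered by length) are connected by a monotone `N`-chain. -/
noncomputable def cmon (a : α) : ℕ∞ :=
  sInf {N : ℕ∞ | ∀ z ∈ Z a, ∀ z' ∈ Z a, Multiset.card z ≤ Multiset.card z' →
    Chain a (fun x y => (d x y : ℕ∞) ≤ N ∧ Multiset.card x ≤ Multiset.card y) z z'}

/-- The adjacent catenary degree of an element:
`c_adj(a) = sup{d(Z_k(a), Z_l(a)) : k, l ∈ L(a) adjacent}`. -/
noncomputable def cadj (a : α) : ℕ∞ :=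
  sSup {r : ℕ∞ | ∃ k l : ℕ, Adjacent a k l ∧ r = (dS (Zk a k) (Zk a l) : ℕ∞)}

noncomputable def catH (α : Type*) [CancelCommMonoid α] : ℕ∞ := ⨆ a : α, cat a
noncomputable def ceqH (α : Type*) [CancelCommMonoid α] : ℕ∞ := ⨆ a : α, ceq a
noncomputable def cmonH (α : Type*) [CancelCommMonoid α] : ℕ∞ := ⨆ a : α, cmon a
noncomputable def cadjH (α : Type*) [CancelCommMonoid α] : ℕ∞ := ⨆ a : α, cadj a

/-- `gcd(x, y) ≠ 1`: the two factorizations share an atom. -/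
def RStep (x y : Fac α) : Prop := ∃ u, u ∈ x ∧ u ∈ y

/-- `z ≈ z'`: there is an `R`-chain concatenating `z` and `z'` in `Z a`. -/
def RRel (a : α) (z z' : Fac α) : Prop := Chain a RStep z z'

/-- `z ≈_eq z'`: there is an equal-length `R`-chain concatenating `z` and `z'` in `Z a`. -/
def RRelEq (a : α) (z z' : Fac α) : Prop :=
  Chain a (fun x y => RStep x y ∧ Multiset.card x = Multiset.card y) z z'

/-- There is a monotone `R`-chain from `z` to `z'` in `Z a`. -/
def MonRChain (a : α) (z z' : Fac α) : Prop :=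
  Chain a (fun x y => RStep x y ∧ Multiset.card x ≤ Multiset.card y) z z'

/-- `μ(a)`: the supremum, over the `R`-classes `ρ` of `Z a`, of the minimal length of
an element of `ρ`. -/
noncomputable def mu (a : α) : ℕ∞ :=
  sSup {r : ℕ∞ | ∃ z ∈ Z a,
    r = ((sInf {n : ℕ | ∃ z', RRel a z z' ∧ Multiset.card z' = n} : ℕ) : ℕ∞)}

noncomputable def muH (α : Type*) [CancelCommMonoid α] : ℕ∞ := ⨆ a : α, mu a

/-- `μ_eq(a) = sup{k ∈ L(a) : Z_k(a) has more than one ≈_eq-class}`. -/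
noncomputable def mueq (a : α) : ℕ∞ :=
  sSup {r : ℕ∞ | ∃ k ∈ L a,
    (∃ z ∈ Zk a k, ∃ z' ∈ Zk a k, ¬ RRelEq a z z') ∧ r = (k : ℕ∞)}

noncomputable def mueqH (α : Type*) [CancelCommMonoid α] : ℕ∞ := ⨆ a : α, mueq a

/-- `μ_adj(a) = sup{k ∈ L(a) : d(Z_k(a), Z_l(a)) = k for the l ∈ L(a), l < k adjacent to k}`. -/
noncomputable def muadj (a : α) : ℕ∞ :=
  sSup {r : ℕ∞ | ∃ k ∈ L a,
    (∃ l : ℕ, Adjacent a l k ∧ dS (Zk a k) (Zk a l) = k) ∧ r = (k : ℕ∞)}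

noncomputable def muadjH (α : Type*) [CancelCommMonoid α] : ℕ∞ := ⨆ a : α, muadj a

/-- The monoid of relations of `H`, as a subset of `Z(H) × Z(H)`. -/
def relMon (α : Type*) [CancelCommMonoid α] : Set (Fac α × Fac α) :=
  {p | piF p.1 = piF p.2}

/-- The monoid of equal-length relations of `H`. -/
def relMonEq (α : Type*) [CancelCommMonoid α] : Set (Fac α × Fac α) :=
  {p | piF p.1 = piF p.2 ∧ Multiset.card p.1 = Multiset.card p.2}

/-- The monoid of monotone relations of `H`. -/
def relMonMon (α : Type*) [CancelCommMonoid α] : Set (Fac α × Fac α) :=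
  {p | piF p.1 = piF p.2 ∧ Multiset.card p.1 ≤ Multiset.card p.2}

/-- `p` is an atom (irreducible element) of the reduced submonoid `S` of `Z(H) × Z(H)`. -/
def IsAtomIn (S : Set (Fac α × Fac α)) (p : Fac α × Fac α) : Prop :=
  p ∈ S ∧ p ≠ 0 ∧ ∀ q ∈ S, ∀ r ∈ S, p = q + r → q = 0 ∨ r = 0

/-- `A_a(S) = A(S) ∩ (Z(a) × Z(a))`. -/
def AtomsAt (S : Set (Fac α × Fac α)) (a : α) : Set (Fac α × Fac α) :=
  {p | IsAtomIn S p ∧ p.1 ∈ Z a ∧ p.2 ∈ Z a}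

/-- The tame degree `t(a, x)`. -/
noncomputable def tdeg (a : α) (x : Fac α) : ℕ∞ :=
  sInf {N : ℕ∞ | ∀ z ∈ Z a, (∃ w ∈ Z a, x ≤ w) →
    ∃ z' ∈ Z a, x ≤ z' ∧ (d z z' : ℕ∞) ≤ N}

/-- The tame degree `t(H) = sup{t(a, u) : a ∈ H, u ∈ A(H)}`. -/
noncomputable def tH (α : Type*) [CancelCommMonoid α] : ℕ∞ :=
  ⨆ (a : α) (u : {u : α // Irreducible u}), tdeg a {u}

/-- The `m`-adjacent catenary degree of an element:
`c_{ad,m}(a) = sup{d(Z_k(a), Z_{[k-m,k)}(a)) : k ∈ L(a)}`. -/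
noncomputable def cadm (m : ℕ) (a : α) : ℕ∞ :=
  sSup {r : ℕ∞ | ∃ k ∈ L a, r = (dS (Zk a k) (ZM a (Set.Ico (k - m) k)) : ℕ∞)}

noncomputable def cadmH (α : Type*) [CancelCommMonoid α] (m : ℕ) : ℕ∞ := ⨆ a : α, cadm m a

/-- `μ_{ad,m}(a) = sup{k ∈ L(a) : d(Z_k(a), Z_{[k-m,k)}(a)) = k}`. -/
noncomputable def muadm (m : ℕ) (a : α) : ℕ∞ :=
  sSup {r : ℕ∞ | ∃ k ∈ L a, dS (Zk a k) (ZM a (Set.Ico (k - m) k)) = k ∧ r = (k : ℕ∞)}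

noncomputable def muadmH (α : Type*) [CancelCommMonoid α] (m : ℕ) : ℕ∞ := ⨆ a : α, muadm m a

/-- `H` is reduced: the only unit is `1`. -/
def Reduced (α : Type*) [CancelCommMonoid α] : Prop := ∀ a : α, IsUnit a → a = 1

/-- `H` is atomic: every element is a product of atoms. -/
def Atomic (α : Type*) [CancelCommMonoid α] : Prop := ∀ a : α, ∃ z : Fac α, piF z = a

/-- The ascending chain condition on principal ideals. -/
def ACCP (α : Type*) [CancelCommMonoid α] : Prop :=
  ∀ f : ℕ → α, (∀ n, f (n + 1) ∣ f n) → ∃ N, ∀ n, N ≤ n → f N ∣ f n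

lemma piF_add (x y : Fac α) : piF (x + y) = piF x * piF y := by
  simp [piF]

lemma rrelEq_refl {a : α} {x : Fac α} (hx : x ∈ Z a) : RRelEq a x x :=
  ⟨0, fun _ => x, rfl, rfl, fun _ => hx, fun i => i.elim0⟩

/-- Let `H` be a reduced, commutative, cancellative, atomic monoid, `a ∈ H`, and
`x, y ∈ Z(a)` with `|x| = |y|`. If `x` and `y` are not `≈_eq`-related, then
`(x, y) ∈ A_a(∼_{H,eq})`. -/
theorem stmt2 {α : Type*} [CancelCommMonoid α]
    (hred : Reduced α) (hatomic : Atomic α) (a : α) (x y : Fac α)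
    (hx : x ∈ Z a) (hy : y ∈ Z a) (hlen : Multiset.card x = Multiset.card y)
    (hne : ¬ RRelEq a x y) :
    (x, y) ∈ AtomsAt (relMonEq α) a := by
  refine ⟨⟨⟨hx.trans hy.symm, hlen⟩, ?_, ?_⟩, hx, hy⟩
  · intro h
    have h1 : x = y := by
      have hx0 : x = 0 := congrArg Prod.fst h
      have hy0 : y = 0 := congrArg Prod.snd h
      rw [hx0, hy0]
    exact hne (h1 ▸ rrelEq_refl hx)
  · intro q hq r hr heq
    by_contra h
    push_neg at h
    obtain ⟨hq0, hr0⟩ := h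
    have hxq : x = q.1 + r.1 := congrArg Prod.fst heq
    have hyq : y = q.2 + r.2 := congrArg Prod.snd heq
    have hq1 : q.1 ≠ 0 := by
      intro h0
      apply hq0
      have : Multiset.card q.2 = 0 := by rw [← hq.2, h0]; simp
      have h2 : q.2 = 0 := Multiset.card_eq_zero.mp this
      exact Prod.ext h0 h2
    have hr1 : r.1 ≠ 0 := by
      intro h0
      apply hr0
      have : Multiset.card r.2 = 0 := by rw [← hr.2, h0]; simp
      have h2 : r.2 = 0 := Multiset.card_eq_zero.mp this
      exact Prod.ext h0 h2
    have hq2 : q.2 ≠ 0 := by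
      intro h0
      apply hq0
      have : Multiset.card q.1 = 0 := by rw [hq.2, h0]; simp
      exact Prod.ext (Multiset.card_eq_zero.mp this) h0
    obtain ⟨u, hu⟩ := Multiset.exists_mem_of_ne_zero hr1
    obtain ⟨v, hv⟩ := Multiset.exists_mem_of_ne_zero hq2
    set z : Fac α := q.2 + r.1 with hzdef
    have hz : z ∈ Z a := by
      show piF z = a
      have : piF z = piF x := by
        rw [hxq, hzdef, piF_add, piF_add, hq.1]
      rw [this]; exact hx
    apply hne
    refine ⟨2, ![x, z, y], rfl, rfl, ?_, ?_⟩
    · intro i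
      fin_cases i <;> simpa using (by assumption : _ ∈ Z a)
    · intro i
      fin_cases i
      · refine ⟨⟨u, ?_, ?_⟩, ?_⟩
        · show u ∈ x; rw [hxq]; exact Multiset.mem_add.mpr (Or.inr hu)
        · show u ∈ z; exact Multiset.mem_add.mpr (Or.inr hu)
        · show Multiset.card x = Multiset.card z
          rw [hxq, hzdef, Multiset.card_add, Multiset.card_add, hq.2]
      · refine ⟨⟨v, ?_, ?_⟩, ?_⟩
        · show v ∈ z; exact Multiset.mem_add.mpr (Or.inl hv)
        · show v ∈ y; rw [hyq]; exact Multiset.mem_add.mpr (Or.inl hv)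
        · show Multiset.card z = Multiset.card y
          rw [hyq, hzdef, Multiset.card_add, Multiset.card_add, hr.2]

end CMR
end

section
/- Let H be a reduced, commutative, cancellative, atomic monoid. Then c_eq(a) ≥ μ_eq(a) for every a ∈ H, and c_eq(H) = μ_eq(H). -/
namespace CMR

variable {α : Type*} [CancelCommMonoid α]

open Relation

private lemma chain_refl {a : α} {P : Fac α → Fac α → Prop} {z : Fac α} (hz : z ∈ Z a) :
    Chain a P z z :=
  ⟨0, fun _ => z, rfl, rfl, fun _ => hz, fun i => i.elim0⟩

private lemma chain_snoc {a : α} {P : Fac α → Fac α → Prop} {z w y : Fac α}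
    (h : Chain a P z w) (hy : y ∈ Z a) (hstep : P w y) : Chain a P z y := by
  obtain ⟨n, c, h0, hl, hmem, hs⟩ := h
  refine ⟨n + 1, Fin.snoc c y, ?_, ?_, ?_, ?_⟩
  · rw [show (0 : Fin (n + 1 + 1)) = (0 : Fin (n + 1)).castSucc from rfl,
      Fin.snoc_castSucc, h0]
  · simp
  · intro i
    refine Fin.lastCases ?_ ?_ i
    · simpa using hy
    · intro j; rw [Fin.snoc_castSucc]; exact hmem j
  · intro i
    refine Fin.lastCases ?_ ?_ i
    · rw [Fin.succ_last, Fin.snoc_last, Fin.snoc_castSucc, hl]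
      exact hstep
    · intro j
      rw [Fin.succ_castSucc, Fin.snoc_castSucc, Fin.snoc_castSucc]
      exact hs j

private lemma chain_to_rtg {a : α} {P : Fac α → Fac α → Prop} {z z' : Fac α}
    (h : Chain a P z z') :
    ReflTransGen (fun x y => P x y ∧ y ∈ Z a) z z' := by
  obtain ⟨n, c, h0, hl, hmem, hs⟩ := h
  subst h0; subst hl
  have : ∀ i : Fin (n + 1), ReflTransGen (fun x y => P x y ∧ y ∈ Z a) (c 0) (c i) := by
    intro i
    induction i using Fin.induction with
    | zero => exact ReflTransGen.refl
    | succ j ih => exact ih.tail ⟨hs j, hmem j.succ⟩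
  exact this (Fin.last n)

private lemma rtg_to_chain {a : α} {P : Fac α → Fac α → Prop} {z z' : Fac α} (hz : z ∈ Z a)
    (h : ReflTransGen (fun x y => P x y ∧ y ∈ Z a) z z') : Chain a P z z' := by
  induction h with
  | refl => exact chain_refl hz
  | tail _ hstep ih => exact chain_snoc ih hstep.2 hstep.1

private lemma rtg_invariant {R : Fac α → Fac α → Prop} {Q : Fac α → Prop} {z w : Fac α}
    (hz : Q z) (hstep : ∀ x y, R x y → Q x → Q y) (h : ReflTransGen R z w) : Q w := by
  induction h with
  | refl => exact hz
  | tail _ s ih => exact hstep _ _ s ih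

private lemma piF_cons (u : {u : α // Irreducible u}) (s : Fac α) :
    piF (u ::ₘ s) = u.val * piF s := by
  simp [piF]

private lemma d_eq [inst : DecidableEq {u : α // Irreducible u}] (x y : Fac α) :
    d x y = max (Multiset.card (x - y)) (Multiset.card (y - x)) := by
  have h : inst = Classical.decEq {u : α // Irreducible u} := Subsingleton.elim _ _
  subst h
  rfl

private lemma d_cons (u : {u : α // Irreducible u}) (x y : Fac α) :
    d (u ::ₘ x) (u ::ₘ y) = d x y := by
  classical
  rw [d_eq, d_eq, Multiset.sub_cons, Multiset.erase_cons_head, Multiset.sub_cons,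
    Multiset.erase_cons_head]

private lemma d_le_of_card {k : ℕ} {x y : Fac α}
    (hx : Multiset.card x = k) (hy : Multiset.card y = k) : d x y ≤ k := by
  classical
  rw [d_eq]
  refine max_le ?_ ?_
  · exact (Multiset.card_le_card tsub_le_self).trans hx.le
  · exact (Multiset.card_le_card tsub_le_self).trans hy.le

private lemma card_le_d_of_not_rstep {k : ℕ} {x y : Fac α}
    (hx : Multiset.card x = k) (hno : ¬ RStep x y) : k ≤ d x y := by
  classical
  have hxy : x - y = x := by
    ext u
    rw [Multiset.count_sub]
    rcases Nat.eq_zero_or_pos (Multiset.count u y) with h | h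
    · rw [h, Nat.sub_zero]
    · have huy : u ∈ y := Multiset.count_pos.mp h
      have hux : u ∉ x := fun hux => hno ⟨u, hux, huy⟩
      rw [Multiset.count_eq_zero_of_notMem hux, Nat.zero_sub]
  rw [d_eq]
  refine le_trans ?_ (le_max_left _ _)
  rw [hxy, hx]

private lemma key (N : ℕ∞) (hN : ∀ b : α, mueq b ≤ N) :
    ∀ k : ℕ, ∀ a : α, ∀ z z' : Fac α, z ∈ Z a → z' ∈ Z a →
      Multiset.card z = k → Multiset.card z' = k →
      ReflTransGen (fun x y =>
        ((d x y : ℕ∞) ≤ N ∧ Multiset.card x = Multiset.card y) ∧ y ∈ Z a) z z' := by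
  intro k
  induction k using Nat.strong_induction_on with
  | _ k IH =>
    intro a z z' hz hz' hcz hcz'
    classical
    by_cases hR : RRelEq a z z'
    · have h := chain_to_rtg hR
      clear hR hz' hcz'
      induction h with
      | refl => exact ReflTransGen.refl
      | @tail w y hzw hstep ih =>
        have hwk : w ∈ Z a ∧ Multiset.card w = k := by
          refine rtg_invariant (Q := fun x => x ∈ Z a ∧ Multiset.card x = k) ⟨hz, hcz⟩ ?_ hzw
          rintro x y ⟨⟨-, hcard⟩, hy⟩ ⟨-, hxk⟩
          exact ⟨hy, hcard.symm.trans hxk⟩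
        obtain ⟨⟨u, huw, huy⟩, hcwy⟩ := hstep.1
        have hy : y ∈ Z a := hstep.2
        have hkpos : 0 < k := hwk.2 ▸ Multiset.card_pos_iff_exists_mem.mpr ⟨u, huw⟩
        set x0 := w.erase u with hx0
        set y0 := y.erase u with hy0
        have hwe : u ::ₘ x0 = w := Multiset.cons_erase huw
        have hye : u ::ₘ y0 = y := Multiset.cons_erase huy
        have hpx : (u : α) * piF x0 = a := by
          rw [← piF_cons, hwe]; exact hwk.1
        have hpy : (u : α) * piF y0 = a := by
          rw [← piF_cons, hye]; exact hy
        have hb : piF y0 = piF x0 := mul_left_cancel (hpy.trans hpx.symm)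
        have hcx0 : Multiset.card x0 = k - 1 := by
          rw [hx0, Multiset.card_erase_of_mem huw, hwk.2]
          rfl
        have hcy0 : Multiset.card y0 = k - 1 := by
          rw [hy0, Multiset.card_erase_of_mem huy, ← hcwy, hwk.2]
          rfl
        have hsub : ReflTransGen (fun x y =>
            ((d x y : ℕ∞) ≤ N ∧ Multiset.card x = Multiset.card y) ∧ y ∈ Z (piF x0)) x0 y0 :=
          IH (k - 1) (Nat.sub_lt hkpos one_pos) (piF x0) x0 y0 rfl hb hcx0 hcy0
        have hlift : ReflTransGen (fun x y =>
            ((d x y : ℕ∞) ≤ N ∧ Multiset.card x = Multiset.card y) ∧ y ∈ Z a)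
            (u ::ₘ x0) (u ::ₘ y0) := by
          refine ReflTransGen.lift (fun s => u ::ₘ s) ?_ _ _ hsub
          rintro s t ⟨⟨hd, hc⟩, ht⟩
          refine ⟨⟨?_, ?_⟩, ?_⟩
          · rw [d_cons]; exact hd
          · simp [hc]
          · show piF (u ::ₘ t) = a
            rw [piF_cons, ht, hpx]
        rw [hwe, hye] at hlift
        exact ih.trans hlift
    · have hkL : k ∈ L a := ⟨z, hz, hcz⟩
      have hzk : z ∈ Zk a k := ⟨hz, hcz⟩
      have hzk' : z' ∈ Zk a k := ⟨hz', hcz'⟩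
      have hk : (k : ℕ∞) ≤ mueq a :=
        le_sSup ⟨k, hkL, ⟨z, hzk, z', hzk', hR⟩, rfl⟩
      have hd : (d z z' : ℕ∞) ≤ N := by
        refine le_trans ?_ (hk.trans (hN a))
        exact_mod_cast d_le_of_card hcz hcz'
      exact ReflTransGen.single ⟨⟨hd, hcz.trans hcz'.symm⟩, hz'⟩

private lemma part1 (a : α) : mueq a ≤ ceq a := by
  refine sSup_le ?_
  rintro r ⟨k, hkL, ⟨z, hzk, z', hzk', hne⟩, rfl⟩
  obtain ⟨hz, hcz⟩ : z ∈ Z a ∧ Multiset.card z = k := hzk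
  obtain ⟨hz', hcz'⟩ : z' ∈ Z a ∧ Multiset.card z' = k := hzk'
  refine le_sInf ?_
  intro N hN
  by_contra hlt
  push_neg at hlt
  have hrtg := chain_to_rtg (hN z hz z' hz' (hcz.trans hcz'.symm))
  apply hne
  apply rtg_to_chain hz
  clear hne hz' hcz'
  induction hrtg with
  | refl => exact ReflTransGen.refl
  | @tail w y hzw hstep ih =>
    have hcw : Multiset.card w = k := by
      refine rtg_invariant (Q := fun x => Multiset.card x = k) hcz ?_ hzw
      rintro x y ⟨⟨-, hcard⟩, -⟩ hxk
      exact hcard.symm.trans hxk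
    refine ih.tail ⟨⟨?_, hstep.1.2⟩, hstep.2⟩
    by_contra hno
    have h1 : (k : ℕ∞) ≤ N :=
      le_trans (by exact_mod_cast card_le_d_of_not_rstep hcw hno) hstep.1.1
    exact absurd h1 (not_le.mpr hlt)

private lemma part2 (a : α) : ceq a ≤ mueqH α := by
  refine sInf_le ?_
  intro z hz z' hz' hcard
  exact rtg_to_chain hz
    (key (mueqH α) (fun b => le_iSup mueq b) (Multiset.card z) a z z' hz hz' rfl hcard.symm)

/-- Let `H` be a reduced, commutative, cancellative, atomic monoid. Then
`c_eq(a) ≥ μ_eq(a)` for every `a ∈ H`, and `c_eq(H) = μ_eq(H)`. -/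
theorem stmt4 {α : Type*} [CancelCommMonoid α]
    (hred : Reduced α) (hatomic : Atomic α) :
    (∀ a : α, mueq a ≤ ceq a) ∧ ceqH α = mueqH α := by
  refine ⟨part1, le_antisymm (iSup_le fun a => part2 a)
    (iSup_le fun a => (part1 a).trans (le_iSup ceq a))⟩

end CMR
end
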